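/- Let A be a unital C*-algebra, a ∈ A a positive element, and let α, β be real numbers with 0 < α < β. Then for every hermitian continuous linear functional f on A, r_{a^β}(f) ≤ ‖a^{β−α}‖ · r_{a^α}(f), where a^γ denotes the real power of the positive element a defined by continuous functional calculus. -/

import Mathlib

open scoped ComplexOrder NNReal

variable {A : Type*} [CStarAlgebra A] [PartialOrder A] [StarOrderedRing A]

/-- A continuous linear functional on a C*-algebra is positive if it is nonnegative on
positive elements (using the complex order). -/
def IsPosFunctional {A : Type*} [CStarAlgebra A] [PartialOrder A] [StarOrderedRing A]
    (f : A →L[ℂ] ℂ) : Prop :=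
  ∀ x : A, 0 ≤ x → 0 ≤ f x

/-- A continuous linear functional is hermitian if `f (star x) = conj (f x)` for all `x`. -/
def IsHermitianFunctional {A : Type*} [CStarAlgebra A] (f : A →L[ℂ] ℂ) : Prop :=
  ∀ x : A, f (star x) = starRingEnd ℂ (f x)

/-- The seminorm `r_a` associated with a positive element `a`:
`r_a(f) = inf { f₁(a) + f₂(a) | f = f₁ - f₂, f₁, f₂ positive }`. -/
noncomputable def rSeminorm {A : Type*} [CStarAlgebra A] [PartialOrder A] [StarOrderedRing A]
    (a : A) (f : A →L[ℂ] ℂ) : ℝ :=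
  sInf { r : ℝ | ∃ f₁ f₂ : A →L[ℂ] ℂ, IsPosFunctional f₁ ∧ IsPosFunctional f₂ ∧
    f = f₁ - f₂ ∧ (r : ℂ) = f₁ a + f₂ a }

/-- The key operator inequality: `a ^ β ≤ ‖a ^ (β - α)‖ • a ^ α`. -/
lemma rpow_le_norm_smul_rpow (a : A) (ha : 0 ≤ a) {α β : ℝ} (hα : 0 < α) (hαβ : α < β) :
    a ^ β ≤ ‖a ^ (β - α)‖ • a ^ α := by
  nontriviality A
  have hcont : ContinuousOn (fun x : ℝ≥0 => x ^ α) (spectrum ℝ≥0 a) :=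
    (NNReal.continuousOn_rpow_const (Or.inr hα.le))
  have hsmul : ‖a ^ (β - α)‖ • a ^ α = (‖a ^ (β - α)‖₊ : ℝ≥0) • a ^ α := by
    rw [NNReal.smul_def, coe_nnnorm]
  rw [hsmul, CFC.rpow_def (a := a) (y := β), CFC.rpow_def (a := a) (y := α),
    ← cfc_smul (‖a ^ (β - α)‖₊) (fun x : ℝ≥0 => x ^ α) a hcont]
  refine cfc_mono (fun x hx => ?_)
    (NNReal.continuousOn_rpow_const (Or.inr (by linarith)))    (hcont.const_smul (‖a ^ (β - α)‖₊))
  have hmem : x ^ (β - α) ∈ spectrum ℝ≥0 (a ^ (β - α)) := by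
    rw [CFC.rpow_def,
      cfc_map_spectrum (fun y : ℝ≥0 => y ^ (β - α)) a ha
        (NNReal.continuousOn_rpow_const (Or.inr (by linarith)))]
    exact ⟨x, hx, rfl⟩
  have hle : x ^ (β - α) ≤ ‖a ^ (β - α)‖₊ := spectrum.le_nnnorm_of_mem hmem
  have hβ : β - α + α = β := by ring
  calc x ^ β = x ^ (β - α) * x ^ α := by
        rw [← NNReal.rpow_add' (by rw [hβ]; exact ne_of_gt (hα.trans hαβ)) x, hβ]
    _ ≤ ‖a ^ (β - α)‖₊ * x ^ α := mul_le_mul_left hle _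
    _ = ‖a ^ (β - α)‖₊ • x ^ α := rfl

lemma IsPosFunctional.eq_re (g : A →L[ℂ] ℂ) (hg : IsPosFunctional g) {x : A} (hx : 0 ≤ x) :
    g x = ((g x).re : ℂ) ∧ 0 ≤ (g x).re := by
  have h := hg x hx
  rw [Complex.le_def] at h
  simp only [Complex.zero_re, Complex.zero_im] at h
  exact ⟨by { apply Complex.ext <;> simp [h.2.symm] }, h.1⟩

lemma IsPosFunctional.mono (g : A →L[ℂ] ℂ) (hg : IsPosFunctional g) {x y : A}
    (hxy : x ≤ y) : g x ≤ g y := by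
  have := hg (y - x) (sub_nonneg.mpr hxy)
  rw [map_sub] at this
  exact sub_nonneg.mp this

/-- For `0 < α < β` and hermitian `f`, `r_{a^β}(f) ≤ ‖a^{β-α}‖ * r_{a^α}(f)`. -/
theorem rSeminorm_rpow_le (a : A) (ha : 0 ≤ a) (α β : ℝ) (hα : 0 < α) (hαβ : α < β)
    (f : A →L[ℂ] ℂ) (hf : IsHermitianFunctional f) :
    rSeminorm (a ^ β) f ≤ ‖a ^ (β - α)‖ * rSeminorm (a ^ α) f := by
  classical
  set c : ℝ := ‖a ^ (β - α)‖ with hc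
  have hc0 : (0 : ℝ) ≤ c := norm_nonneg _
  have key : a ^ β ≤ c • a ^ α := rpow_le_norm_smul_rpow a ha hα hαβ
  have haα : (0 : A) ≤ a ^ α := CFC.rpow_nonneg
  have haβ : (0 : A) ≤ a ^ β := CFC.rpow_nonneg
  set Sα : Set ℝ := { r : ℝ | ∃ f₁ f₂ : A →L[ℂ] ℂ, IsPosFunctional f₁ ∧ IsPosFunctional f₂ ∧
    f = f₁ - f₂ ∧ (r : ℂ) = f₁ (a ^ α) + f₂ (a ^ α) } with hSα
  set Sβ : Set ℝ := { r : ℝ | ∃ f₁ f₂ : A →L[ℂ] ℂ, IsPosFunctional f₁ ∧ IsPosFunctional f₂ ∧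
    f = f₁ - f₂ ∧ (r : ℂ) = f₁ (a ^ β) + f₂ (a ^ β) } with hSβ
  have hlbβ : ∀ r ∈ Sβ, (0 : ℝ) ≤ r := by
    rintro r ⟨f₁, f₂, h₁, h₂, -, hr⟩
    have e₁ := (h₁.eq_re f₁ haβ)
    have e₂ := (h₂.eq_re f₂ haβ)
    have : (r : ℂ) = (((f₁ (a ^ β)).re + (f₂ (a ^ β)).re : ℝ) : ℂ) := by
      rw [hr, e₁.1, e₂.1, Complex.ofReal_add]; simp
    have hre : r = (f₁ (a ^ β)).re + (f₂ (a ^ β)).re := by exact_mod_cast this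
    rw [hre]; exact add_nonneg e₁.2 e₂.2
  have hbddβ : BddBelow Sβ := ⟨0, fun r hr => hlbβ r hr⟩
  have comp : ∀ r ∈ Sα, sInf Sβ ≤ c * r := by
    rintro r ⟨f₁, f₂, h₁, h₂, hdec, hr⟩
    have e₁ := h₁.eq_re f₁ haβ
    have e₂ := h₂.eq_re f₂ haβ
    set s : ℝ := (f₁ (a ^ β)).re + (f₂ (a ^ β)).re with hs
    have hsmem : s ∈ Sβ := by
      refine ⟨f₁, f₂, h₁, h₂, hdec, ?_⟩
      rw [Complex.ofReal_add, ← e₁.1, ← e₂.1]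
    have hineq : (s : ℂ) ≤ ((c * r : ℝ) : ℂ) := by
      have l₁ : f₁ (a ^ β) ≤ (c : ℂ) * f₁ (a ^ α) := by
        have := h₁.mono f₁ key
        rwa [f₁.map_smul_of_tower, Complex.real_smul] at this
      have l₂ : f₂ (a ^ β) ≤ (c : ℂ) * f₂ (a ^ α) := by
        have := h₂.mono f₂ key
        rwa [f₂.map_smul_of_tower, Complex.real_smul] at this
      calc (s : ℂ) = f₁ (a ^ β) + f₂ (a ^ β) := by rw [hs, Complex.ofReal_add, ← e₁.1, ← e₂.1]
        _ ≤ (c : ℂ) * f₁ (a ^ α) + (c : ℂ) * f₂ (a ^ α) := add_le_add l₁ l₂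
        _ = (c : ℂ) * (f₁ (a ^ α) + f₂ (a ^ α)) := by ring
        _ = ((c * r : ℝ) : ℂ) := by rw [Complex.ofReal_mul, hr]
    have hsr : s ≤ c * r := by
      have := (Complex.le_def.mp hineq).1
      simpa using this
    exact le_trans (csInf_le hbddβ hsmem) hsr
  show sInf Sβ ≤ c * sInf Sα
  by_cases hS : Sα.Nonempty
  · rcases eq_or_lt_of_le hc0 with hceq | hcpos
    · obtain ⟨r, hr⟩ := hS
      have h0 := comp r hr
      rw [← hceq] at h0 ⊢
      simpa using h0
    · have hdiv : sInf Sβ / c ≤ sInf Sα :=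
        le_csInf hS fun r hr => (div_le_iff₀ hcpos).mpr (by rw [mul_comm]; exact comp r hr)
      calc sInf Sβ = sInf Sβ / c * c := by field_simp
        _ ≤ sInf Sα * c := mul_le_mul_of_nonneg_right hdiv hc0
        _ = c * sInf Sα := mul_comm _ _
  · have hSempty : Sα = ∅ := Set.not_nonempty_iff_eq_empty.mp hS
    have hSβEmpty : Sβ = ∅ := by
      rw [Set.eq_empty_iff_forall_notMem]
      rintro r ⟨f₁, f₂, h₁, h₂, hdec, -⟩
      have e₁ := h₁.eq_re f₁ haα
      have e₂ := h₂.eq_re f₂ haα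
      exact hS ⟨(f₁ (a ^ α)).re + (f₂ (a ^ α)).re, f₁, f₂, h₁, h₂, hdec,
        by rw [Complex.ofReal_add, ← e₁.1, ← e₂.1]⟩
    rw [hSempty, hSβEmpty, Real.sInf_empty, mul_zero]
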